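/- For every n ≥ 2, the n-th quantization error satisfies V_n ≤ (1/18^{ℓ(n)}) · (1/8) · (2^{ℓ(n)+1} − n + (1/9)(n − 2^{ℓ(n)})), where ℓ(n) is the unique natural number with 2^{ℓ(n)} ≤ n < 2^{ℓ(n)+1}. -/

import Mathlib

open MeasureTheory Set
open scoped ENNReal
open scoped Pointwise

noncomputable section

/-- The similarity map `S_j(x) = x/3^j + 1 - 1/3^(j-1)`. -/
def Smap (j : ℕ) (x : ℝ) : ℝ := x / 3 ^ j + 1 - 1 / 3 ^ (j - 1)

/-- The similarity ratio `s_j = 3^(-j)`. -/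
def srat (j : ℕ) : ℝ := (3 : ℝ)⁻¹ ^ j

/-- The probability `p_j = 2^(-j)`. -/
def prob (j : ℕ) : ℝ := (2 : ℝ)⁻¹ ^ j

/-- `J_j = S_j([0,1])`. -/
def Jset (j : ℕ) : Set ℝ := Smap j '' Set.Icc 0 1

/-- For a word `ω = ω₁⋯ω_n`, `S_ω = S_{ω₁} ∘ ⋯ ∘ S_{ω_n}`. -/
def Sword : List ℕ → ℝ → ℝ
  | [] => id
  | j :: ω => Smap j ∘ Sword ω

/-- `s_ω = s_{ω₁} ⋯ s_{ω_n}`. -/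
def sword (ω : List ℕ) : ℝ := (ω.map srat).prod

/-- `p_ω = p_{ω₁} ⋯ p_{ω_n}`. -/
def pword (ω : List ℕ) : ℝ := (ω.map prob).prod

/-- `J_ω = S_ω([0,1])`. -/
def Jword (ω : List ℕ) : Set ℝ := Sword ω '' Set.Icc 0 1

/-- `ω⁻(ω_{|ω|} + j)` : the word obtained from `ω` by increasing its last letter by `j`. -/
def wordInc (ω : List ℕ) (j : ℕ) : List ℕ := ω.dropLast ++ [ω.getLastD 1 + j]

/-- `a(ω) = S_ω(1/2)`. -/
def aw (ω : List ℕ) : ℝ := Sword ω (1 / 2)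

/-- `a(ω, ∞) = S_{ω⁻(ω_{|ω|}+1)}(1/2) + s_{ω⁻(ω_{|ω|}+1)}`. -/
def awInf (ω : List ℕ) : ℝ := Sword (wordInc ω 1) (1 / 2) + sword (wordInc ω 1)

/-- `J_{(ω,∞)} = ⋃_{j ≥ 1} J_{ω⁻(ω_{|ω|}+j)}`. -/
def JwordInf (ω : List ℕ) : Set ℝ := ⋃ j : ℕ, Jword (wordInc ω (j + 1))

/-- A (nonempty) word over the alphabet `ℕ = {1, 2, 3, …}`. -/
def IsWord (ω : List ℕ) : Prop := ω ≠ [] ∧ ∀ i ∈ ω, 1 ≤ i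

/-- The self-similarity equation `P = ∑_{j=1}^∞ 2^{-j} · P ∘ S_j^{-1}`. -/
def SelfSim (P : Measure ℝ) : Prop :=
  P = Measure.sum fun j : ℕ => ((2 : ℝ≥0∞) ^ (j + 1))⁻¹ • P.map (Smap (j + 1))

/-- The distortion error `∫ min_{a ∈ A} (x - a)² dP(x)` of a set `A` of points. -/
def err (P : Measure ℝ) (A : Set ℝ) : ℝ :=
  ∫ x, sInf ((fun a => (x - a) ^ 2) '' A) ∂P

/-- The `n`-th quantization error. -/
def quantErr (P : Measure ℝ) (n : ℕ) : ℝ :=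
  sInf {v | ∃ A : Set ℝ, A.Finite ∧ A.Nonempty ∧ A.ncard ≤ n ∧ v = err P A}

/-- An optimal set of `n`-means. -/
def IsOptimal (P : Measure ℝ) (n : ℕ) (A : Set ℝ) : Prop :=
  A.Finite ∧ A.Nonempty ∧ A.ncard ≤ n ∧ err P A = quantErr P n

/-- The Voronoi region of `a` with respect to `A`. -/
def voronoi (A : Set ℝ) (a : ℝ) : Set ℝ := {x | ∀ b ∈ A, |x - a| ≤ |x - b|}

/-- `α(ℓ) = {a(ω) : p_ω = 2^{-ℓ}} ∪ {a(ω,∞) : p_ω = 2^{-ℓ}}`. -/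
def alphaSet (l : ℕ) : Set ℝ :=
  {x | ∃ ω : List ℕ, IsWord ω ∧ pword ω = (2 : ℝ)⁻¹ ^ l ∧ (x = aw ω ∨ x = awInf ω)}

/-- The set `α_n(I)` built from `α(ℓ)` and `I ⊆ α(ℓ)`. -/
def alphaNI (l : ℕ) (I : Set ℝ) : Set ℝ :=
  (alphaSet l \ I)
    ∪ {x | ∃ ω : List ℕ, IsWord ω ∧ pword ω = (2 : ℝ)⁻¹ ^ l ∧ aw ω ∈ I ∧
        (x = aw (ω ++ [1]) ∨ x = awInf (ω ++ [1]))}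
    ∪ {x | ∃ ω : List ℕ, IsWord ω ∧ pword ω = (2 : ℝ)⁻¹ ^ l ∧ awInf ω ∈ I ∧
        (x = aw (wordInc ω 1) ∨ x = awInf (wordInc ω 1))}

def Tmap (x : ℝ) : ℝ := x / 3 + 2 / 3

def gfun (A : Set ℝ) (x : ℝ) : ℝ := sInf ((fun a => (x - a) ^ 2) '' A)

def Efun (P : Measure ℝ) (A : Set ℝ) : ℝ≥0∞ := ∫⁻ x, ENNReal.ofReal (gfun A x) ∂P

-- gfun scaling under x ↦ x/3 + c
lemma gfun_scale (c : ℝ) (A : Set ℝ) (y : ℝ) :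
    gfun ((fun x => x / 3 + c) '' A) (y / 3 + c) = 1 / 9 * gfun A y := by
  unfold gfun
  rw [Set.image_image]
  have h1 : (fun a => (y / 3 + c - (a / 3 + c)) ^ 2) '' A
      = (fun t => (1 / 9 : ℝ) * t) '' ((fun a => (y - a) ^ 2) '' A) := by
    rw [Set.image_image]
    apply Set.image_congr
    intro a _
    ring
  have h2 : (fun t => (1 / 9 : ℝ) * t) '' ((fun a => (y - a) ^ 2) '' A)
      = (1 / 9 : ℝ) • ((fun a => (y - a) ^ 2) '' A) := by
    rw [← Set.image_smul]
    simp [smul_eq_mul]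
  rw [h1, h2, Real.sInf_smul_of_nonneg (by norm_num), smul_eq_mul]

lemma Smap_one : Smap 1 = fun x : ℝ => x / 3 + 0 := by
  funext x; simp [Smap]

lemma Tmap_eq : Tmap = fun x : ℝ => x / 3 + 2 / 3 := rfl

lemma meas_Smap (j : ℕ) : Measurable (Smap j) := by unfold Smap; fun_prop

lemma meas_Tmap : Measurable Tmap := by unfold Tmap; fun_prop

lemma Smap_succ' (j : ℕ) (x : ℝ) : Smap (j + 2) x = Tmap (Smap (j + 1) x) := by
  simp only [Smap, Tmap, Nat.add_sub_cancel]
  rw [show j + 2 - 1 = j + 1 by omega]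
  have h3 : (3:ℝ) ^ (j+1) ≠ 0 := by positivity
  have h3' : (3:ℝ) ^ j ≠ 0 := by positivity
  have h3'' : (3:ℝ) ^ (j+2) ≠ 0 := by positivity
  field_simp
  ring

lemma lint_sum (P : Measure ℝ) (hself : SelfSim P) (f : ℝ → ℝ≥0∞) (hf : Measurable f) :
    ∫⁻ x, f x ∂P = ∑' j : ℕ, ((2 : ℝ≥0∞) ^ (j + 1))⁻¹ * ∫⁻ y, f (Smap (j + 1) y) ∂P := by
  conv_lhs => rw [hself]
  rw [lintegral_sum_measure]
  exact tsum_congr fun j => by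
    rw [lintegral_smul_measure, lintegral_map hf (meas_Smap _), smul_eq_mul]

lemma lint_two (P : Measure ℝ) (hself : SelfSim P) (f : ℝ → ℝ≥0∞) (hf : Measurable f) :
    ∫⁻ x, f x ∂P
      = 2⁻¹ * ∫⁻ y, f (Smap 1 y) ∂P + 2⁻¹ * ∫⁻ y, f (Tmap y) ∂P := by
  rw [lint_sum P hself f hf, tsum_eq_zero_add' ENNReal.summable]
  congr 1
  · norm_num
  · have key : ∀ j : ℕ, ((2 : ℝ≥0∞) ^ (j + 1 + 1))⁻¹ * ∫⁻ y, f (Smap (j + 1 + 1) y) ∂P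
        = 2⁻¹ * (((2 : ℝ≥0∞) ^ (j + 1))⁻¹ * ∫⁻ y, (f ∘ Tmap) (Smap (j + 1) y) ∂P) := by
      intro j
      have h1 : ((2 : ℝ≥0∞) ^ (j + 1 + 1))⁻¹ = 2⁻¹ * ((2 : ℝ≥0∞) ^ (j + 1))⁻¹ := by
        rw [pow_succ', ENNReal.mul_inv (by norm_num) (by norm_num)]
      have h2 : ∀ y : ℝ, f (Smap (j + 1 + 1) y) = (f ∘ Tmap) (Smap (j + 1) y) := by
        intro y
        have := Smap_succ' j y
        simp only [Function.comp]
        rw [show j + 1 + 1 = j + 2 from rfl, this]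
      simp only [h2, h1, mul_assoc]
    rw [tsum_congr key, ENNReal.tsum_mul_left,
      ← lint_sum P hself (f ∘ Tmap) (hf.comp meas_Tmap)]
    rfl

lemma gfun_nonneg (A : Set ℝ) (x : ℝ) : 0 ≤ gfun A x :=
  Real.sInf_nonneg fun _ ⟨_, _, ha⟩ => ha ▸ sq_nonneg _

lemma gfun_bddBelow (A : Set ℝ) (x : ℝ) : BddBelow ((fun a => (x - a) ^ 2) '' A) :=
  ⟨0, fun _ ⟨_, _, ha⟩ => ha ▸ sq_nonneg _⟩

lemma gfun_le (A : Set ℝ) (x a : ℝ) (ha : a ∈ A) : gfun A x ≤ (x - a) ^ 2 :=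
  csInf_le (gfun_bddBelow A x) (Set.mem_image_of_mem _ ha)

lemma gfun_mono (A B : Set ℝ) (hAB : A ⊆ B) (hA : A.Nonempty) (x : ℝ) :
    gfun B x ≤ gfun A x :=
  csInf_le_csInf (gfun_bddBelow B x) (hA.image _) (Set.image_mono hAB)

lemma gfun_empty : gfun (∅ : Set ℝ) = fun _ => 0 := by
  funext x; simp [gfun, Real.sInf_empty]

lemma gfun_meas (A : Set ℝ) (hA : A.Finite) : Measurable (gfun A) := by
  refine Set.Finite.induction_on (motive := fun s _ => Measurable (gfun s)) A hA ?_ ?_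
  · show Measurable (gfun ∅)
    rw [gfun_empty]; exact measurable_const
  · intro a s _ hs ih
    show Measurable (gfun (insert a s))
    rcases s.eq_empty_or_nonempty with rfl | hne
    · have : gfun {a} = fun x => (x - a) ^ 2 := by
        funext x; simp [gfun]
      rw [show insert a (∅ : Set ℝ) = {a} by simp, this]; fun_prop
    · have : gfun (insert a s) = fun x => min ((x - a) ^ 2) (gfun s x) := by
        funext x
        rw [gfun, Set.image_insert_eq, csInf_insert (gfun_bddBelow s x) (hne.image _)]
        rfl
      rw [this]
      exact Measurable.min (by fun_prop) ih

lemma err_nonneg (P : Measure ℝ) (A : Set ℝ) : 0 ≤ err P A :=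
  integral_nonneg fun x => gfun_nonneg A x

lemma err_eq (P : Measure ℝ) (A : Set ℝ) (hA : A.Finite) :
    err P A = (Efun P A).toReal := by
  have : err P A = ∫ x, gfun A x ∂P := rfl
  rw [this, integral_eq_lintegral_of_nonneg_ae
    (Filter.Eventually.of_forall (gfun_nonneg A)) (gfun_meas A hA).aestronglyMeasurable]
  rfl

lemma ae_mem (P : Measure ℝ) [IsProbabilityMeasure P] (hsupp : P (Set.Icc 0 1) = 1) :
    ∀ᵐ x ∂P, x ∈ Set.Icc (0:ℝ) 1 := by
  have h := measure_compl (μ := P) (s := Set.Icc (0:ℝ) 1) measurableSet_Icc (measure_ne_top P _)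
  rw [measure_univ, hsupp, tsub_self] at h
  rw [ae_iff]
  exact h

lemma Efun_ne_top (P : Measure ℝ) [IsProbabilityMeasure P] (hsupp : P (Set.Icc 0 1) = 1)
    (A : Set ℝ) (hne : A.Nonempty) : Efun P A ≠ ⊤ := by
  obtain ⟨a₀, ha₀⟩ := hne
  have hb : Efun P A ≤ ENNReal.ofReal ((|a₀| + 1) ^ 2) := by
    have hm : ∀ᵐ x ∂P, ENNReal.ofReal (gfun A x) ≤ ENNReal.ofReal ((|a₀| + 1) ^ 2) := by
      filter_upwards [ae_mem P hsupp] with x hx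
      apply ENNReal.ofReal_le_ofReal
      refine le_trans (gfun_le A x a₀ ha₀) ?_
      have h1 := hx.1
      have h2 := hx.2
      nlinarith [abs_nonneg a₀, le_abs_self a₀, neg_abs_le a₀]
    calc Efun P A ≤ ∫⁻ _, ENNReal.ofReal ((|a₀| + 1) ^ 2) ∂P := lintegral_mono_ae hm
      _ = ENNReal.ofReal ((|a₀| + 1) ^ 2) := by rw [lintegral_const, measure_univ, mul_one]
  exact (lt_of_le_of_lt hb ENNReal.ofReal_lt_top).ne

lemma two_inv_eq : (2 : ℝ≥0∞)⁻¹ = ENNReal.ofReal (1 / 2) := by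
  rw [one_div, ENNReal.ofReal_inv_of_pos (by norm_num), ENNReal.ofReal_ofNat]

lemma W_eq (P : Measure ℝ) [IsProbabilityMeasure P] (hsupp : P (Set.Icc 0 1) = 1)
    (hself : SelfSim P) :
    ∫⁻ x, ENNReal.ofReal ((x - 1/2) ^ 2) ∂P = ENNReal.ofReal (1/8) := by
  set f : ℝ → ℝ≥0∞ := fun x => ENNReal.ofReal ((x - 1/2) ^ 2) with hfdef
  have hf : Measurable f := Measurable.ennreal_ofReal (by fun_prop)
  set W := ∫⁻ x, f x ∂P with hWdef
  have hWle : W ≤ ENNReal.ofReal (1/4) := by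
    have hm : ∀ᵐ x ∂P, f x ≤ ENNReal.ofReal (1/4) := by
      filter_upwards [ae_mem P hsupp] with x hx
      exact ENNReal.ofReal_le_ofReal (by nlinarith [hx.1, hx.2])
    calc W ≤ ∫⁻ _, ENNReal.ofReal (1/4) ∂P := lintegral_mono_ae hm
      _ = ENNReal.ofReal (1/4) := by rw [lintegral_const, measure_univ, mul_one]
  have hWt : W ≠ ⊤ := (lt_of_le_of_lt hWle ENNReal.ofReal_lt_top).ne
  have key : W = ENNReal.ofReal (1/9) * W + ENNReal.ofReal (1/9) := by
    have hpt : ∀ y : ℝ, f (Smap 1 y) + f (Tmap y)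
        = ENNReal.ofReal (2/9) * f y + ENNReal.ofReal (2/9) := by
      intro y
      show ENNReal.ofReal ((Smap 1 y - 1/2) ^ 2) + ENNReal.ofReal ((Tmap y - 1/2) ^ 2)
        = ENNReal.ofReal (2/9) * ENNReal.ofReal ((y - 1/2) ^ 2) + ENNReal.ofReal (2/9)
      rw [← ENNReal.ofReal_mul (by norm_num),
        ← ENNReal.ofReal_add (by positivity) (by positivity),
        ← ENNReal.ofReal_add (by positivity) (by norm_num)]
      congr 1
      simp only [Smap, Tmap]
      norm_num
      ring
    have step1 : W = 2⁻¹ * ∫⁻ y, f (Smap 1 y) ∂P + 2⁻¹ * ∫⁻ y, f (Tmap y) ∂P :=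
      lint_two P hself f hf
    have step2 : (∫⁻ y, f (Smap 1 y) ∂P) + ∫⁻ y, f (Tmap y) ∂P
        = ENNReal.ofReal (2/9) * W + ENNReal.ofReal (2/9) := by
      have hadd : ∫⁻ y, (f (Smap 1 y) + f (Tmap y)) ∂P
          = (∫⁻ y, f (Smap 1 y) ∂P) + ∫⁻ y, f (Tmap y) ∂P :=
        lintegral_add_left (hf.comp (meas_Smap 1)) _
      rw [← hadd]
      calc ∫⁻ y, (f (Smap 1 y) + f (Tmap y)) ∂P
          = ∫⁻ y, (ENNReal.ofReal (2/9) * f y + ENNReal.ofReal (2/9)) ∂P := by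
            exact lintegral_congr hpt
        _ = ENNReal.ofReal (2/9) * W + ENNReal.ofReal (2/9) := by
            rw [lintegral_add_right _ measurable_const, lintegral_const_mul _ hf,
              lintegral_const, measure_univ, mul_one]
    have h29 : (2:ℝ≥0∞)⁻¹ * ENNReal.ofReal (2/9) = ENNReal.ofReal (1/9) := by
      rw [two_inv_eq, ← ENNReal.ofReal_mul (by norm_num)]
      norm_num
    calc W = 2⁻¹ * ∫⁻ y, f (Smap 1 y) ∂P + 2⁻¹ * ∫⁻ y, f (Tmap y) ∂P := step1
      _ = 2⁻¹ * ((∫⁻ y, f (Smap 1 y) ∂P) + ∫⁻ y, f (Tmap y) ∂P) := by rw [mul_add]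
      _ = 2⁻¹ * (ENNReal.ofReal (2/9) * W + ENNReal.ofReal (2/9)) := by rw [step2]
      _ = ENNReal.ofReal (1/9) * W + ENNReal.ofReal (1/9) := by
          rw [mul_add, ← mul_assoc, h29]
  have hW9 : ENNReal.ofReal (1/9) * W ≠ ⊤ := ENNReal.mul_ne_top ENNReal.ofReal_ne_top hWt
  have htr := congrArg ENNReal.toReal key
  rw [ENNReal.toReal_add hW9 ENNReal.ofReal_ne_top, ENNReal.toReal_mul,
    ENNReal.toReal_ofReal (by norm_num : (0:ℝ) ≤ 1/9)] at htr
  have hval : W.toReal = 1/8 := by linarith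
  rw [← ENNReal.ofReal_toReal hWt, hval]

lemma quantErr_le (P : Measure ℝ) (n : ℕ) (A : Set ℝ) (hfin : A.Finite)
    (hne : A.Nonempty) (hcard : A.ncard ≤ n) : quantErr P n ≤ err P A :=
  csInf_le ⟨0, fun _ ⟨B, _, _, _, hv⟩ => hv ▸ err_nonneg P B⟩ ⟨A, hfin, hne, hcard, rfl⟩

lemma quantErr_nonneg (P : Measure ℝ) (n : ℕ) : 0 ≤ quantErr P n :=
  Real.sInf_nonneg fun _ ⟨B, _, _, _, hv⟩ => hv ▸ err_nonneg P B

lemma quantErr_exists (P : Measure ℝ) (n : ℕ) (hn : 1 ≤ n) (ε : ℝ) (hε : 0 < ε) :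
    ∃ A : Set ℝ, A.Finite ∧ A.Nonempty ∧ A.ncard ≤ n ∧ err P A < quantErr P n + ε := by
  have hsetne : {v | ∃ A : Set ℝ, A.Finite ∧ A.Nonempty ∧ A.ncard ≤ n ∧ v = err P A}.Nonempty :=
    ⟨err P {0}, {0}, Set.finite_singleton _, Set.singleton_nonempty _,
      by simpa using hn, rfl⟩
  obtain ⟨v, ⟨A, hfin, hne, hcard, hv⟩, hlt⟩ :=
    exists_lt_of_csInf_lt hsetne (lt_add_of_pos_right (quantErr P n) hε)
  exact ⟨A, hfin, hne, hcard, hv ▸ hlt⟩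

lemma Efun_union_le (P : Measure ℝ) [IsProbabilityMeasure P] (hself : SelfSim P)
    (A₁ A₂ : Set ℝ) (h₁ : A₁.Finite) (h₂ : A₂.Finite)
    (hne₁ : A₁.Nonempty) (hne₂ : A₂.Nonempty) :
    Efun P (Smap 1 '' A₁ ∪ Tmap '' A₂)
      ≤ 2⁻¹ * (ENNReal.ofReal (1/9) * Efun P A₁) + 2⁻¹ * (ENNReal.ofReal (1/9) * Efun P A₂) := by
  set A := Smap 1 '' A₁ ∪ Tmap '' A₂ with hA
  have hAfin : A.Finite := (h₁.image _).union (h₂.image _)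
  have hfa : Measurable fun x => ENNReal.ofReal (gfun A x) :=
    Measurable.ennreal_ofReal (gfun_meas A hAfin)
  rw [Efun, lint_two P hself _ hfa]
  have hS : ∫⁻ y, ENNReal.ofReal (gfun A (Smap 1 y)) ∂P
      ≤ ENNReal.ofReal (1/9) * Efun P A₁ := by
    have hpt : ∀ y : ℝ, gfun A (Smap 1 y) ≤ 1/9 * gfun A₁ y := by
      intro y
      calc gfun A (Smap 1 y) ≤ gfun (Smap 1 '' A₁) (Smap 1 y) :=
            gfun_mono _ _ Set.subset_union_left (hne₁.image _) _
        _ = 1/9 * gfun A₁ y := by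
            rw [Smap_one]
            exact gfun_scale 0 A₁ y
    calc ∫⁻ y, ENNReal.ofReal (gfun A (Smap 1 y)) ∂P
        ≤ ∫⁻ y, ENNReal.ofReal (1/9 * gfun A₁ y) ∂P :=
          lintegral_mono fun y => ENNReal.ofReal_le_ofReal (hpt y)
      _ = ∫⁻ y, ENNReal.ofReal (1/9) * ENNReal.ofReal (gfun A₁ y) ∂P := by
          simp only [ENNReal.ofReal_mul (by norm_num : (0:ℝ) ≤ 1/9)]
      _ = ENNReal.ofReal (1/9) * Efun P A₁ :=
          lintegral_const_mul _ (Measurable.ennreal_ofReal (gfun_meas A₁ h₁))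
  have hT : ∫⁻ y, ENNReal.ofReal (gfun A (Tmap y)) ∂P
      ≤ ENNReal.ofReal (1/9) * Efun P A₂ := by
    have hpt : ∀ y : ℝ, gfun A (Tmap y) ≤ 1/9 * gfun A₂ y := by
      intro y
      calc gfun A (Tmap y) ≤ gfun (Tmap '' A₂) (Tmap y) :=
            gfun_mono _ _ Set.subset_union_right (hne₂.image _) _
        _ = 1/9 * gfun A₂ y := by
            rw [Tmap_eq]
            exact gfun_scale (2/3) A₂ y
    calc ∫⁻ y, ENNReal.ofReal (gfun A (Tmap y)) ∂P
        ≤ ∫⁻ y, ENNReal.ofReal (1/9 * gfun A₂ y) ∂P :=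
          lintegral_mono fun y => ENNReal.ofReal_le_ofReal (hpt y)
      _ = ∫⁻ y, ENNReal.ofReal (1/9) * ENNReal.ofReal (gfun A₂ y) ∂P := by
          simp only [ENNReal.ofReal_mul (by norm_num : (0:ℝ) ≤ 1/9)]
      _ = ENNReal.ofReal (1/9) * Efun P A₂ :=
          lintegral_const_mul _ (Measurable.ennreal_ofReal (gfun_meas A₂ h₂))
  exact add_le_add (mul_le_mul_right hS _) (mul_le_mul_right hT _)

lemma quantErr_split (P : Measure ℝ) [IsProbabilityMeasure P]
    (hsupp : P (Set.Icc 0 1) = 1) (hself : SelfSim P)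
    (n₁ n₂ : ℕ) (h₁ : 1 ≤ n₁) (h₂ : 1 ≤ n₂) :
    quantErr P (n₁ + n₂) ≤ 1/18 * (quantErr P n₁ + quantErr P n₂) := by
  refine le_of_forall_pos_le_add ?_
  intro ε hε
  obtain ⟨A₁, hfin₁, hne₁, hcard₁, herr₁⟩ := quantErr_exists P n₁ h₁ (9*ε) (by linarith)
  obtain ⟨A₂, hfin₂, hne₂, hcard₂, herr₂⟩ := quantErr_exists P n₂ h₂ (9*ε) (by linarith)
  set A := Smap 1 '' A₁ ∪ Tmap '' A₂ with hA
  have hAfin : A.Finite := (hfin₁.image _).union (hfin₂.image _)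
  have hAne : A.Nonempty := Set.Nonempty.inl (hne₁.image _)
  have hAcard : A.ncard ≤ n₁ + n₂ := by
    refine le_trans (Set.ncard_union_le _ _) (add_le_add ?_ ?_)
    · exact le_trans (Set.ncard_image_le hfin₁) hcard₁
    · exact le_trans (Set.ncard_image_le hfin₂) hcard₂
  have he₁ : 0 ≤ err P A₁ := err_nonneg P A₁
  have he₂ : 0 ≤ err P A₂ := err_nonneg P A₂
  have hEeq₁ : Efun P A₁ = ENNReal.ofReal (err P A₁) := by
    rw [err_eq P A₁ hfin₁, ENNReal.ofReal_toReal (Efun_ne_top P hsupp A₁ hne₁)]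
  have hEeq₂ : Efun P A₂ = ENNReal.ofReal (err P A₂) := by
    rw [err_eq P A₂ hfin₂, ENNReal.ofReal_toReal (Efun_ne_top P hsupp A₂ hne₂)]
  have hE : Efun P A ≤ ENNReal.ofReal (1/18 * (err P A₁ + err P A₂)) := by
    calc Efun P A ≤ 2⁻¹ * (ENNReal.ofReal (1/9) * Efun P A₁)
          + 2⁻¹ * (ENNReal.ofReal (1/9) * Efun P A₂) :=
        Efun_union_le P hself A₁ A₂ hfin₁ hfin₂ hne₁ hne₂
      _ = ENNReal.ofReal (1/18 * err P A₁) + ENNReal.ofReal (1/18 * err P A₂) := by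
        rw [hEeq₁, hEeq₂, two_inv_eq,
          ← ENNReal.ofReal_mul (by norm_num : (0:ℝ) ≤ 1/9),
          ← ENNReal.ofReal_mul (by norm_num : (0:ℝ) ≤ 1/2),
          ← ENNReal.ofReal_mul (by norm_num : (0:ℝ) ≤ 1/9),
          ← ENNReal.ofReal_mul (by norm_num : (0:ℝ) ≤ 1/2)]
        rw [show (1:ℝ)/2 * (1/9 * err P A₁) = 1/18 * err P A₁ by ring,
          show (1:ℝ)/2 * (1/9 * err P A₂) = 1/18 * err P A₂ by ring]
      _ = ENNReal.ofReal (1/18 * (err P A₁ + err P A₂)) := by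
        rw [← ENNReal.ofReal_add (by linarith) (by linarith)]
        ring_nf
  have herrA : err P A ≤ 1/18 * (err P A₁ + err P A₂) := by
    rw [err_eq P A hAfin]
    exact ENNReal.toReal_le_of_le_ofReal (by linarith) hE
  calc quantErr P (n₁ + n₂) ≤ err P A := quantErr_le P _ A hAfin hAne hAcard
    _ ≤ 1/18 * (err P A₁ + err P A₂) := herrA
    _ ≤ 1/18 * ((quantErr P n₁ + 9*ε) + (quantErr P n₂ + 9*ε)) := by
        apply mul_le_mul_of_nonneg_left (by linarith) (by norm_num)
    _ = 1/18 * (quantErr P n₁ + quantErr P n₂) + ε := by ring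

lemma quantErr_le_eighth (P : Measure ℝ) [IsProbabilityMeasure P]
    (hsupp : P (Set.Icc 0 1) = 1) (hself : SelfSim P) (n : ℕ) (hn : 1 ≤ n) :
    quantErr P n ≤ 1/8 := by
  have h1 : gfun {(1:ℝ)/2} = fun x => (x - 1/2) ^ 2 := by
    funext x; simp [gfun]
  have hEf : Efun P {(1:ℝ)/2} = ∫⁻ x, ENNReal.ofReal ((x - 1/2) ^ 2) ∂P := by
    unfold Efun
    simp only [h1]
  have herr : err P {(1:ℝ)/2} = 1/8 := by
    rw [err_eq P _ (Set.finite_singleton _), hEf, W_eq P hsupp hself,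
      ENNReal.toReal_ofReal (by norm_num)]
  calc quantErr P n ≤ err P {(1:ℝ)/2} :=
      quantErr_le P n _ (Set.finite_singleton _) (Set.singleton_nonempty _) (by simpa using hn)
    _ = 1/8 := herr

lemma main_bound (P : Measure ℝ) [IsProbabilityMeasure P]
    (hsupp : P (Set.Icc 0 1) = 1) (hself : SelfSim P) :
    ∀ l n : ℕ, 2 ^ l ≤ n → n ≤ 2 ^ (l + 1) →
      quantErr P n
        ≤ 1 / 18 ^ l * (1 / 8) * (2 ^ (l + 1) - (n : ℝ) + 1 / 9 * ((n : ℝ) - 2 ^ l)) := by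
  intro l
  induction l with
  | zero =>
    intro n h1 h2
    norm_num at h1 h2
    interval_cases n
    · have := quantErr_le_eighth P hsupp hself 1 le_rfl
      norm_num
      linarith
    · have hsplit := quantErr_split P hsupp hself 1 1 le_rfl le_rfl
      have hb := quantErr_le_eighth P hsupp hself 1 le_rfl
      norm_num at hsplit ⊢
      linarith
  | succ l ih =>
    intro n h1 h2
    have e1 : 2 ^ (l + 1) = 2 * 2 ^ l := by ring
    have e2 : 2 ^ (l + 2) = 4 * 2 ^ l := by ring
    set n₁ := (n + 1) / 2 with hn₁
    set n₂ := n / 2 with hn₂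
    have hsum : n₁ + n₂ = n := by omega
    have hb₁ : 2 ^ l ≤ n₁ := by omega
    have hb₁' : n₁ ≤ 2 ^ (l + 1) := by omega
    have hb₂ : 2 ^ l ≤ n₂ := by omega
    have hb₂' : n₂ ≤ 2 ^ (l + 1) := by omega
    have hpos₁ : 1 ≤ n₁ := le_trans Nat.one_le_two_pow hb₁
    have hpos₂ : 1 ≤ n₂ := le_trans Nat.one_le_two_pow hb₂
    have hq₁ := ih n₁ hb₁ hb₁'
    have hq₂ := ih n₂ hb₂ hb₂'
    have hsplit := quantErr_split P hsupp hself n₁ n₂ hpos₁ hpos₂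
    rw [hsum] at hsplit
    have hcast : (n₁ : ℝ) + (n₂ : ℝ) = (n : ℝ) := by exact_mod_cast congrArg Nat.cast hsum
    calc quantErr P n ≤ 1/18 * (quantErr P n₁ + quantErr P n₂) := hsplit
      _ ≤ 1/18 * ((1 / 18 ^ l * (1 / 8) * (2 ^ (l + 1) - (n₁ : ℝ) + 1 / 9 * ((n₁ : ℝ) - 2 ^ l)))
          + (1 / 18 ^ l * (1 / 8) * (2 ^ (l + 1) - (n₂ : ℝ) + 1 / 9 * ((n₂ : ℝ) - 2 ^ l)))) := by
          apply mul_le_mul_of_nonneg_left (add_le_add hq₁ hq₂) (by norm_num)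
      _ = 1 / 18 ^ (l + 1) * (1 / 8)
          * (2 ^ (l + 1 + 1) - (n : ℝ) + 1 / 9 * ((n : ℝ) - 2 ^ (l + 1))) := by
          rw [← hcast]
          have h18 : (18:ℝ) ^ l ≠ 0 := by positivity
          field_simp
          ring

theorem quantErr_upper_bound (P : Measure ℝ) [IsProbabilityMeasure P]
    (hsupp : P (Set.Icc 0 1) = 1) (hself : SelfSim P)
    (n : ℕ) (hn : 2 ≤ n) (l : ℕ) (hl : 2 ^ l ≤ n) (hl' : n < 2 ^ (l + 1)) :
    quantErr P n
      ≤ 1 / 18 ^ l * (1 / 8) * (2 ^ (l + 1) - (n : ℝ) + 1 / 9 * ((n : ℝ) - 2 ^ l)) :=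
  main_bound P hsupp hself l n hl hl'.le

end
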